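/- Let f be L-smooth and μ-strongly convex with minimizer x_*, and suppose AggHB parameters satisfy the conditions of Lemma 2 (in particular BF ≤ (1 - max_i βᵢ)/(48L²) with B, F as defined). Then for weights w_k = (1-μF/2)^{-(k+1)}: 3LF ∑_{k=0}^K w_k ‖x_k - x̃_k‖² ≤ (F/4) ∑_{k=0}^K w_k (f(x_k) - f(x_*)), where x̃_k are the virtual iterates x̃_k = x_k - (1/m)∑ᵢ (βᵢγᵢ/(1-βᵢ))V_{k-1}^{(i)}. -/

import Mathlib

open scoped RealInnerProductSpace

section Helpers

variable {n : ℕ}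

lemma AggHB_line_hasDerivAt (f : EuclideanSpace ℝ (Fin n) → ℝ) (hf : Differentiable ℝ f)
    (x v : EuclideanSpace ℝ (Fin n)) (t : ℝ) :
    HasDerivAt (fun s : ℝ => f (x + s • v)) ⟪gradient f (x + t • v), v⟫ t := by
  have hline : HasDerivAt (fun s : ℝ => x + s • v) v t := by
    simpa using ((hasDerivAt_id t).smul_const v).const_add x
  have hg := ((hf (x + t • v)).hasGradientAt).hasFDerivAt
  have := hg.comp_hasDerivAt t hline
  simpa [Function.comp_def] using this

lemma AggHB_descent (f : EuclideanSpace ℝ (Fin n) → ℝ) (hf : Differentiable ℝ f)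
    (L : ℝ)
    (hsmooth : ∀ x y, ‖gradient f x - gradient f y‖ ≤ L * ‖x - y‖)
    (x v : EuclideanSpace ℝ (Fin n)) :
    f (x + v) ≤ f x + ⟪gradient f x, v⟫ + L / 2 * ‖v‖ ^ 2 := by
  set ψ : ℝ → ℝ := fun t => f (x + t • v) - t * ⟪gradient f x, v⟫ - L / 2 * t ^ 2 * ‖v‖ ^ 2 with hψ
  have hd : ∀ t : ℝ, HasDerivAt ψ
      (⟪gradient f (x + t • v), v⟫ - ⟪gradient f x, v⟫ - L * t * ‖v‖ ^ 2) t := by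
    intro t
    have h1 := AggHB_line_hasDerivAt f hf x v t
    have h2 : HasDerivAt (fun s : ℝ => s * ⟪gradient f x, v⟫) ⟪gradient f x, v⟫ t := by
      simpa using (hasDerivAt_id t).mul_const _
    have h3 : HasDerivAt (fun s : ℝ => L / 2 * s ^ 2 * ‖v‖ ^ 2) (L * t * ‖v‖ ^ 2) t := by
      have : HasDerivAt (fun s : ℝ => s ^ 2) (2 * t) t := by
        simpa using hasDerivAt_pow 2 t
      have := (this.const_mul (L / 2)).mul_const (‖v‖ ^ 2)
      exact this.congr_deriv (by ring)
    rw [hψ]; exact (h1.sub h2).sub h3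
  have hmono : ∀ t ∈ Set.Icc (0:ℝ) 1, ∀ u ∈ Set.Icc (0:ℝ) 1, t ≤ u → ψ u ≤ ψ t := by
    intro t ht u hu htu
    have := antitoneOn_of_deriv_nonpos (convex_Icc (0:ℝ) 1)
      (fun s hs => ((hd s).continuousAt).continuousWithinAt)
      (fun s hs => ((hd s).differentiableAt).differentiableWithinAt)
      (fun s hs => by
        rw [(hd s).deriv]
        rw [interior_Icc] at hs
        have hs0 : 0 < s := hs.1
        have hb : ⟪gradient f (x + s • v) - gradient f x, v⟫ ≤ L * s * ‖v‖ ^ 2 := by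
          calc ⟪gradient f (x + s • v) - gradient f x, v⟫
              ≤ ‖gradient f (x + s • v) - gradient f x‖ * ‖v‖ := real_inner_le_norm _ _
            _ ≤ (L * ‖(x + s • v) - x‖) * ‖v‖ := by
                have := hsmooth (x + s • v) x
                nlinarith [norm_nonneg v]
            _ = L * s * ‖v‖ ^ 2 := by
                rw [add_sub_cancel_left, norm_smul]
                simp [abs_of_pos hs0]; ring
        have : ⟪gradient f (x + s • v), v⟫ - ⟪gradient f x, v⟫ =
            ⟪gradient f (x + s • v) - gradient f x, v⟫ := by
          rw [inner_sub_left]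
        linarith [hb, this.le, this.ge])
    exact this ht hu htu
  have key := hmono 0 (by norm_num) 1 (by norm_num) zero_le_one
  simp only [hψ, zero_smul, add_zero, one_smul, one_pow, zero_pow, one_mul, zero_mul,
    mul_zero, sub_zero] at key
  linarith

lemma AggHB_gradsq (f : EuclideanSpace ℝ (Fin n) → ℝ) (hf : Differentiable ℝ f)
    (L : ℝ) (hL : 0 < L)
    (hsmooth : ∀ x y, ‖gradient f x - gradient f y‖ ≤ L * ‖x - y‖)
    (xstar : EuclideanSpace ℝ (Fin n)) (hmin : ∀ y, f xstar ≤ f y)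
    (x : EuclideanSpace ℝ (Fin n)) :
    ‖gradient f x‖ ^ 2 ≤ 2 * L * (f x - f xstar) := by
  have h := AggHB_descent f hf L hsmooth x (-(1 / L) • gradient f x)
  have h2 := hmin (x + -(1 / L) • gradient f x)
  rw [inner_smul_right, norm_smul] at h
  simp only [norm_neg] at h
  rw [Real.norm_eq_abs, abs_of_pos (by positivity : (0:ℝ) < 1 / L)] at h
  have hinner : ⟪gradient f x, gradient f x⟫ = ‖gradient f x‖ ^ 2 :=
    real_inner_self_eq_norm_sq _
  rw [hinner] at h
  have hL' : L ≠ 0 := ne_of_gt hL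
  have : f xstar ≤ f x + -(1/L) * ‖gradient f x‖^2 + L/2 * ((1/L) * ‖gradient f x‖)^2 :=
    le_trans h2 h
  have hexp : L/2 * ((1/L) * ‖gradient f x‖)^2 = 1/(2*L) * ‖gradient f x‖^2 := by
    field_simp
  rw [hexp] at this
  have h3 : f xstar ≤ f x - 1/(2*L) * ‖gradient f x‖^2 := by
    have hid : -(1/L) * ‖gradient f x‖^2 + 1/(2*L) * ‖gradient f x‖^2
        = -(1/(2*L) * ‖gradient f x‖^2) := by field_simp; ring
    linarith
  have := mul_le_mul_of_nonneg_left (sub_nonneg.mpr h3) (le_of_lt (by positivity : (0:ℝ) < 2*L))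
  calc ‖gradient f x‖^2 = 2*L * (1/(2*L) * ‖gradient f x‖^2) := by field_simp
    _ ≤ 2*L*(f x - f xstar) := by nlinarith

lemma AggHB_cs_sum {ι : Type*} (s : Finset ι) (c : ι → ℝ) (hc : ∀ i ∈ s, 0 ≤ c i)
    (v : ι → EuclideanSpace ℝ (Fin n)) :
    ‖∑ i ∈ s, c i • v i‖ ^ 2 ≤ (∑ i ∈ s, c i) * ∑ i ∈ s, c i * ‖v i‖ ^ 2 := by
  have h1 : ‖∑ i ∈ s, c i • v i‖ ≤ ∑ i ∈ s, c i * ‖v i‖ := by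
    refine (norm_sum_le _ _).trans (le_of_eq ?_)
    refine Finset.sum_congr rfl fun i hi => ?_
    rw [norm_smul, Real.norm_eq_abs, abs_of_nonneg (hc i hi)]
  have h2 : (∑ i ∈ s, c i * ‖v i‖) ^ 2 ≤ (∑ i ∈ s, c i) * ∑ i ∈ s, c i * ‖v i‖ ^ 2 := by
    exact Finset.sum_sq_le_sum_mul_sum_of_sq_eq_mul s hc
      (fun i hi => mul_nonneg (hc i hi) (sq_nonneg _)) (fun i hi => by ring)
  calc ‖∑ i ∈ s, c i • v i‖ ^ 2 ≤ (∑ i ∈ s, c i * ‖v i‖) ^ 2 := by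
        have h0 : (0:ℝ) ≤ ‖∑ i ∈ s, c i • v i‖ := norm_nonneg _
        nlinarith
    _ ≤ _ := h2

lemma AggHB_tri_swap (K : ℕ) (φ : ℕ → ℕ → ℝ) :
    ∑ k ∈ Finset.range K, ∑ j ∈ Finset.range (k+1), φ k j
      = ∑ j ∈ Finset.range K, ∑ k ∈ Finset.Ico j K, φ k j := by
  induction K with
  | zero => simp
  | succ K ih =>
    rw [Finset.sum_range_succ, ih, Finset.sum_range_succ (fun j => ∑ k ∈ Finset.Ico j (K+1), φ k j)]
    have h1 : ∀ j ∈ Finset.range K, ∑ k ∈ Finset.Ico j (K+1), φ k j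
        = (∑ k ∈ Finset.Ico j K, φ k j) + φ K j := by
      intro j hj
      rw [Finset.sum_Ico_succ_top (Nat.le_of_lt (Finset.mem_range.mp hj))]
    have h2 : ∑ j ∈ Finset.range K, ∑ k ∈ Finset.Ico j (K+1), φ k j
        = ∑ j ∈ Finset.range K, ((∑ k ∈ Finset.Ico j K, φ k j) + φ K j) :=
      Finset.sum_congr rfl h1
    have h3 : ∑ k ∈ Finset.Ico K (K+1), φ k K = φ K K := by
      rw [Finset.sum_Ico_eq_sum_range]; simp
    rw [h2, Finset.sum_add_distrib, h3, Finset.sum_range_succ]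
    ring

lemma AggHB_geom_le (r : ℝ) (h0 : 0 ≤ r) (h1 : r < 1) (N : ℕ) :
    ∑ t ∈ Finset.range N, r^t ≤ 1/(1-r) := by
  have h1r : 0 < 1 - r := by linarith
  rw [geom_sum_eq h1.ne]
  have e : (r^N - 1)/(r - 1) = (1 - r^N)/(1 - r) := by
    rw [← neg_div_neg_eq]; congr 1 <;> ring
  rw [e]
  have hn : 1 - r^N ≤ 1 := by nlinarith [pow_nonneg h0 N]
  exact div_le_div_of_nonneg_right hn h1r.le
set_option maxHeartbeats 1000000 in
theorem AggHB_weighted_sum_of_momentums {n : ℕ}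
    (f : EuclideanSpace ℝ (Fin n) → ℝ) (hf : Differentiable ℝ f)
    (L μ : ℝ) (hL : 0 < L) (hμ : 0 ≤ μ)
    (hsmooth : ∀ x y, ‖gradient f x - gradient f y‖ ≤ L * ‖x - y‖)
    (hstrconv : ∀ x y, f x + ⟪gradient f x, y - x⟫ + μ / 2 * ‖y - x‖ ^ 2 ≤ f y)
    (xstar : EuclideanSpace ℝ (Fin n)) (hmin : ∀ y, f xstar ≤ f y)
    (m : ℕ) (β γ : Fin (m + 1) → ℝ)
    (hβ : ∀ i, β i ∈ Set.Ico (0 : ℝ) 1) (hγ : ∀ i, 0 < γ i)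
    (βmax : ℝ) (hβmax : βmax = Finset.univ.sup' Finset.univ_nonempty β)
    (hγμ : ∀ i, 2 * μ * γ i ≤ (1 - βmax) * (1 - β i))
    (F : ℝ) (hF : F = (1 / (m + 1 : ℝ)) * ∑ i, γ i / (1 - β i))
    (hF4L : F ≤ 1 / (4 * L))
    (K : ℕ)
    (B : ℝ) (hB : B = (1 / (m + 1 : ℝ)) *
      ∑ i, β i * γ i * (1 - (β i) ^ (K + 1)) / (1 - β i) ^ 2)
    (hBF : B * F ≤ (1 - βmax) / (48 * L ^ 2))
    (x : ℕ → EuclideanSpace ℝ (Fin n)) (V : Fin (m + 1) → ℕ → EuclideanSpace ℝ (Fin n))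
    (hV0 : ∀ i, V i 0 = gradient f (x 0))
    (hV : ∀ i k, V i (k + 1) = β i • V i k + gradient f (x (k + 1)))
    (hx : ∀ k, x (k + 1) = x k - (1 / (m + 1 : ℝ)) • ∑ i, γ i • V i k)
    (xt : ℕ → EuclideanSpace ℝ (Fin n))
    (hxt0 : xt 0 = x 0)
    (hxt : ∀ k, xt (k + 1) = x (k + 1) - (1 / (m + 1 : ℝ)) •
      ∑ i, (β i * γ i / (1 - β i)) • V i k)
    (w : ℕ → ℝ) (hw : ∀ k, w k = ((1 - μ * F / 2)⁻¹) ^ (k + 1)) :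
    3 * L * F * ∑ k ∈ Finset.range (K + 1), w k * ‖x k - xt k‖ ^ 2 ≤
      F / 4 * ∑ k ∈ Finset.range (K + 1), w k * (f (x k) - f xstar) := by
  classical
  have hMpos : (0:ℝ) < (m + 1 : ℝ) := by positivity
  have h1β : ∀ i, 0 < 1 - β i := fun i => by have := (hβ i).2; linarith
  have hβ0 : ∀ i, 0 ≤ β i := fun i => (hβ i).1
  have hane : ∀ i, 0 ≤ β i * γ i / (1 - β i) :=
    fun i => div_nonneg (mul_nonneg (hβ0 i) (hγ i).le) (h1β i).le
  have hβle : ∀ i, β i ≤ βmax := fun i => hβmax ▸ Finset.le_sup' β (Finset.mem_univ i)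
  have hβmax1 : βmax < 1 := by
    rw [hβmax]; exact (Finset.sup'_lt_iff _).mpr (fun i _ => (hβ i).2)
  have hβmax0 : (0:ℝ) ≤ βmax := le_trans (hβ0 0) (hβle 0)
  have hFpos : 0 < F := by
    rw [hF]
    have : (0:ℝ) < ∑ i, γ i / (1 - β i) :=
      Finset.sum_pos (fun i _ => div_pos (hγ i) (h1β i)) Finset.univ_nonempty
    positivity
  have hμF : μ * F ≤ (1 - βmax) / 2 := by
    have hterm : ∀ i, μ * (γ i / (1 - β i)) ≤ (1 - βmax) / 2 := by
      intro i
      have h := hγμ i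
      rw [mul_div_assoc'] ; rw [div_le_iff₀ (h1β i)]
      nlinarith [h1β i]
    have hsum : ∑ i, μ * (γ i / (1 - β i)) ≤ (m + 1 : ℝ) * ((1 - βmax) / 2) := by
      calc ∑ i, μ * (γ i / (1 - β i)) ≤ ∑ _i : Fin (m+1), (1 - βmax) / 2 :=
            Finset.sum_le_sum (fun i _ => hterm i)
        _ = (m + 1 : ℝ) * ((1 - βmax) / 2) := by
            simp [Finset.sum_const, Finset.card_univ, mul_comm]
    calc μ * F = (1 / (m + 1 : ℝ)) * ∑ i, μ * (γ i / (1 - β i)) := by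
          rw [hF, ← Finset.mul_sum]; ring
      _ ≤ (1 / (m + 1 : ℝ)) * ((m + 1 : ℝ) * ((1 - βmax) / 2)) := by
          exact mul_le_mul_of_nonneg_left hsum (by positivity)
      _ = (1 - βmax) / 2 := by field_simp
  obtain ⟨ρ, hρdef⟩ : ∃ ρ : ℝ, ρ = 1 - μ * F / 2 := ⟨_, rfl⟩
  have hw' : ∀ k, w k = (ρ⁻¹) ^ (k + 1) := fun k => by rw [hw, hρdef]
  have hμF0 : 0 ≤ μ * F := mul_nonneg hμ hFpos.le
  have hρle1 : ρ ≤ 1 := by rw [hρdef]; linarith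
  have hρ34 : 3/4 ≤ ρ := by rw [hρdef]; linarith [hβmax0]
  have hρpos : (0:ℝ) < ρ := lt_of_lt_of_le (by norm_num) hρ34
  have hρβ : ∀ i, 3/4 * (1 - β i) ≤ ρ - β i := by
    intro i
    have h1 := hβle i
    rw [hρdef]
    linarith [hμF]
  have hw0 : ∀ k, 0 ≤ w k := by
    intro k; rw [hw' k]; exact pow_nonneg (inv_nonneg.mpr hρpos.le) _
  -- closed form for V
  have hVf : ∀ i k, V i k = ∑ j ∈ Finset.range (k+1), (β i)^(k-j) • gradient f (x j) := by
    intro i k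
    induction k with
    | zero => simp [hV0]
    | succ k ih =>
      rw [hV, ih, Finset.smul_sum]
      conv_rhs => rw [Finset.sum_range_succ]
      congr 1
      · refine Finset.sum_congr rfl fun j hj => ?_
        rw [smul_smul]
        congr 1
        have hjk : j ≤ k := Nat.lt_succ_iff.mp (Finset.mem_range.mp hj)
        have he : k + 1 - j = (k - j) + 1 := by omega
        rw [he, pow_succ']
      · simp
  -- deviation formula
  have hdiff : ∀ k, x (k+1) - xt (k+1) =
      ∑ p ∈ Finset.univ ×ˢ Finset.range (k+1),
        ((1 / (m + 1 : ℝ)) * (β p.1 * γ p.1 / (1 - β p.1)) * (β p.1)^(k - p.2)) •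
          gradient f (x p.2) := by
    intro k
    rw [hxt k, sub_sub_cancel, Finset.sum_product, Finset.smul_sum]
    refine Finset.sum_congr rfl fun i _ => ?_
    rw [hVf i k, Finset.smul_sum, Finset.smul_sum]
    refine Finset.sum_congr rfl fun j _ => ?_
    rw [smul_smul, smul_smul]
  -- mass bound
  have hc0 : ∀ (k : ℕ) (p : Fin (m+1) × ℕ),
      0 ≤ (1 / (m + 1 : ℝ)) * (β p.1 * γ p.1 / (1 - β p.1)) * (β p.1)^(k - p.2) := by
    intro k p
    exact mul_nonneg (mul_nonneg (by positivity) (hane p.1)) (pow_nonneg (hβ0 p.1) _)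
  have hB0 : 0 ≤ B := by
    rw [hB]
    refine mul_nonneg (by positivity) (Finset.sum_nonneg fun i _ => ?_)
    have h1 : (0:ℝ) ≤ 1 - (β i)^(K+1) := by
      have := pow_le_one₀ (hβ0 i) (hβ i).2.le (n := K+1)
      linarith
    have h2 : (0:ℝ) < (1 - β i)^2 := pow_pos (h1β i) 2
    exact div_nonneg (mul_nonneg (mul_nonneg (hβ0 i) (hγ i).le) h1) h2.le
  have hSk : ∀ k ≤ K, ∑ p ∈ Finset.univ ×ˢ Finset.range (k+1),
      (1 / (m + 1 : ℝ)) * (β p.1 * γ p.1 / (1 - β p.1)) * (β p.1)^(k - p.2) ≤ B := by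
    intro k hk
    rw [Finset.sum_product, hB, Finset.mul_sum]
    refine Finset.sum_le_sum fun i _ => ?_
    have hfac : ∑ j ∈ Finset.range (k+1),
        (1 / (m + 1 : ℝ)) * (β i * γ i / (1 - β i)) * (β i)^(k - j)
        = (1 / (m + 1 : ℝ)) * (β i * γ i / (1 - β i)) * ∑ t ∈ Finset.range (k+1), (β i)^t := by
      rw [Finset.mul_sum,
        ← Finset.sum_range_reflect
          (fun t => (1 / (m + 1 : ℝ)) * (β i * γ i / (1 - β i)) * (β i)^t) (k+1)]
      exact Finset.sum_congr rfl fun j hj => rfl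
    rw [hfac]
    have hgs : ∑ t ∈ Finset.range (k+1), (β i)^t ≤ (1 - (β i)^(K+1)) / (1 - β i) := by
      rw [geom_sum_eq (hβ i).2.ne]
      have e : ((β i)^(k+1) - 1)/(β i - 1) = (1 - (β i)^(k+1))/(1 - β i) := by
        rw [← neg_div_neg_eq]; congr 1 <;> ring
      rw [e]
      have hpow : (β i)^(K+1) ≤ (β i)^(k+1) :=
        pow_le_pow_of_le_one (hβ0 i) (hβ i).2.le (by omega)
      exact div_le_div_of_nonneg_right (by linarith) (h1β i).le
    calc (1 / (m + 1 : ℝ)) * (β i * γ i / (1 - β i)) * ∑ t ∈ Finset.range (k+1), (β i)^t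
        ≤ (1 / (m + 1 : ℝ)) * (β i * γ i / (1 - β i)) * ((1 - (β i)^(K+1)) / (1 - β i)) := by
          exact mul_le_mul_of_nonneg_left hgs (mul_nonneg (by positivity) (hane i))
      _ = (1 / (m + 1 : ℝ)) * (β i * γ i * (1 - (β i)^(K+1)) / (1 - β i)^2) := by
          field_simp
  -- norm bound per step
  have hnormbd : ∀ k ≤ K, ‖x (k+1) - xt (k+1)‖^2 ≤
      B * ∑ p ∈ Finset.univ ×ˢ Finset.range (k+1),
        ((1 / (m + 1 : ℝ)) * (β p.1 * γ p.1 / (1 - β p.1)) * (β p.1)^(k - p.2)) *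
          ‖gradient f (x p.2)‖^2 := by
    intro k hk
    rw [hdiff k]
    refine le_trans (AggHB_cs_sum _ _ (fun p _ => hc0 k p) _) ?_
    refine mul_le_mul_of_nonneg_right (hSk k hk) ?_
    exact Finset.sum_nonneg fun p _ => mul_nonneg (hc0 k p) (sq_nonneg _)
  -- geometric tail bound
  have h1βmax : (0:ℝ) < 1 - βmax := by linarith
  have hgeo : ∀ (i : Fin (m+1)) (j : ℕ),
      ∑ k ∈ Finset.Ico j K, w (k+1) * (β i)^(k-j) ≤ 4/3 * w j / (1 - β i) := by
    intro i j
    have hrpos : 0 ≤ β i * ρ⁻¹ := mul_nonneg (hβ0 i) (inv_nonneg.mpr hρpos.le)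
    have hβρ : β i < ρ := by have := hρβ i; have := h1β i; linarith
    have hrlt : β i * ρ⁻¹ < 1 := by
      rw [← div_eq_mul_inv, div_lt_one hρpos]; exact hβρ
    have hsumr := AggHB_geom_le _ hrpos hrlt (K - j)
    have hρβpos : 0 < ρ - β i := by linarith
    calc ∑ k ∈ Finset.Ico j K, w (k+1) * (β i)^(k-j)
        = ∑ t ∈ Finset.range (K - j), w (j + t + 1) * (β i)^t := by
          rw [Finset.sum_Ico_eq_sum_range]
          exact Finset.sum_congr rfl fun t _ => by rw [Nat.add_sub_cancel_left]
      _ = w j * ∑ t ∈ Finset.range (K - j), ρ⁻¹ * (β i * ρ⁻¹)^t := by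
          rw [Finset.mul_sum]
          refine Finset.sum_congr rfl fun t _ => ?_
          rw [hw' (j + t + 1), hw' j, mul_pow]
          ring
      _ ≤ w j * (ρ⁻¹ * (1/(1 - β i * ρ⁻¹))) := by
          refine mul_le_mul_of_nonneg_left ?_ (hw0 j)
          rw [← Finset.mul_sum]
          exact mul_le_mul_of_nonneg_left hsumr (inv_nonneg.mpr hρpos.le)
      _ ≤ 4/3 * w j / (1 - β i) := by
          have he : ρ⁻¹ * (1/(1 - β i * ρ⁻¹)) = 1/(ρ - β i) := by
            have hne : (1:ℝ) - β i * ρ⁻¹ ≠ 0 := by nlinarith [hrlt]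
            field_simp
          rw [he]
          have hle : 1/(ρ - β i) ≤ (4/3) / (1 - β i) := by
            rw [div_le_div_iff₀ hρβpos (h1β i)]
            have := hρβ i
            linarith
          calc w j * (1/(ρ - β i)) ≤ w j * ((4/3)/(1 - β i)) :=
                mul_le_mul_of_nonneg_left hle (hw0 j)
            _ = 4/3 * w j / (1 - β i) := by ring
  -- step 1 : reorganize and bound by triple sum
  have step1 : ∑ k ∈ Finset.range (K+1), w k * ‖x k - xt k‖^2
      ≤ B * ∑ i, ∑ k ∈ Finset.range K, ∑ j ∈ Finset.range (k+1),
          w (k+1) * ((1 / (m + 1 : ℝ)) * (β i * γ i / (1 - β i)) * (β i)^(k - j)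
            * ‖gradient f (x j)‖^2) := by
    rw [Finset.sum_range_succ']
    have h0 : w 0 * ‖x 0 - xt 0‖^2 = 0 := by simp [hxt0]
    rw [h0, add_zero]
    calc ∑ k ∈ Finset.range K, w (k+1) * ‖x (k+1) - xt (k+1)‖^2
        ≤ ∑ k ∈ Finset.range K, w (k+1) * (B * ∑ p ∈ Finset.univ ×ˢ Finset.range (k+1),
            ((1 / (m + 1 : ℝ)) * (β p.1 * γ p.1 / (1 - β p.1)) * (β p.1)^(k - p.2)) *
              ‖gradient f (x p.2)‖^2) := by
          refine Finset.sum_le_sum fun k hk => ?_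
          exact mul_le_mul_of_nonneg_left
            (hnormbd k (le_of_lt (Finset.mem_range.mp hk))) (hw0 (k+1))
      _ = ∑ k ∈ Finset.range K, ∑ i, ∑ j ∈ Finset.range (k+1),
            B * (w (k+1) * ((1 / (m + 1 : ℝ)) * (β i * γ i / (1 - β i)) * (β i)^(k - j)
              * ‖gradient f (x j)‖^2)) := by
          refine Finset.sum_congr rfl fun k _ => ?_
          rw [Finset.sum_product]
          simp only [Finset.mul_sum]
          exact Finset.sum_congr rfl fun i _ => Finset.sum_congr rfl fun j _ => by ring
      _ = ∑ i, ∑ k ∈ Finset.range K, ∑ j ∈ Finset.range (k+1),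
            B * (w (k+1) * ((1 / (m + 1 : ℝ)) * (β i * γ i / (1 - β i)) * (β i)^(k - j)
              * ‖gradient f (x j)‖^2)) := Finset.sum_comm
      _ = B * ∑ i, ∑ k ∈ Finset.range K, ∑ j ∈ Finset.range (k+1),
            w (k+1) * ((1 / (m + 1 : ℝ)) * (β i * γ i / (1 - β i)) * (β i)^(k - j)
              * ‖gradient f (x j)‖^2) := by
          simp only [Finset.mul_sum]
  -- step 2 : per-machine bound after swapping the triangular sum
  have step2 : ∀ i : Fin (m+1),
      ∑ k ∈ Finset.range K, ∑ j ∈ Finset.range (k+1),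
          w (k+1) * ((1 / (m + 1 : ℝ)) * (β i * γ i / (1 - β i)) * (β i)^(k - j)
            * ‖gradient f (x j)‖^2)
      ≤ ((1 / (m + 1 : ℝ)) * (β i * γ i / (1 - β i)) / (1 - β i)) *
          ((4/3) * ∑ j ∈ Finset.range (K+1), w j * ‖gradient f (x j)‖^2) := by
    intro i
    rw [AggHB_tri_swap K (fun k j => w (k+1) * ((1 / (m + 1 : ℝ)) *
      (β i * γ i / (1 - β i)) * (β i)^(k - j) * ‖gradient f (x j)‖^2))]
    calc ∑ j ∈ Finset.range K, ∑ k ∈ Finset.Ico j K,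
          w (k+1) * ((1 / (m + 1 : ℝ)) * (β i * γ i / (1 - β i)) * (β i)^(k - j)
            * ‖gradient f (x j)‖^2)
        = ∑ j ∈ Finset.range K, ((1 / (m + 1 : ℝ)) * (β i * γ i / (1 - β i)) *
            ‖gradient f (x j)‖^2) * ∑ k ∈ Finset.Ico j K, w (k+1) * (β i)^(k-j) := by
          refine Finset.sum_congr rfl fun j _ => ?_
          rw [Finset.mul_sum]
          exact Finset.sum_congr rfl fun k _ => by ring
      _ ≤ ∑ j ∈ Finset.range K, ((1 / (m + 1 : ℝ)) * (β i * γ i / (1 - β i)) *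
            ‖gradient f (x j)‖^2) * (4/3 * w j / (1 - β i)) := by
          refine Finset.sum_le_sum fun j _ => ?_
          exact mul_le_mul_of_nonneg_left (hgeo i j)
            (mul_nonneg (mul_nonneg (by positivity) (hane i)) (sq_nonneg _))
      _ = ∑ j ∈ Finset.range K, (w j * ‖gradient f (x j)‖^2) *
            (((1 / (m + 1 : ℝ)) * (β i * γ i / (1 - β i)) / (1 - β i)) * (4/3)) := by
          exact Finset.sum_congr rfl fun j _ => by ring
      _ = (∑ j ∈ Finset.range K, w j * ‖gradient f (x j)‖^2) *
            (((1 / (m + 1 : ℝ)) * (β i * γ i / (1 - β i)) / (1 - β i)) * (4/3)) := by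
          rw [← Finset.sum_mul]
      _ ≤ (∑ j ∈ Finset.range (K+1), w j * ‖gradient f (x j)‖^2) *
            (((1 / (m + 1 : ℝ)) * (β i * γ i / (1 - β i)) / (1 - β i)) * (4/3)) := by
          refine mul_le_mul_of_nonneg_right ?_
            (mul_nonneg (div_nonneg (mul_nonneg (by positivity) (hane i)) (h1β i).le)
              (by norm_num))
          exact Finset.sum_le_sum_of_subset_of_nonneg
            (Finset.range_subset_range.mpr (Nat.le_succ K))
            (fun j _ _ => mul_nonneg (hw0 j) (sq_nonneg _))
      _ = ((1 / (m + 1 : ℝ)) * (β i * γ i / (1 - β i)) / (1 - β i)) *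
            ((4/3) * ∑ j ∈ Finset.range (K+1), w j * ‖gradient f (x j)‖^2) := by ring
  -- aggregate over machines
  have hB' : ∑ i, (1 / (m + 1 : ℝ)) * (β i * γ i / (1 - β i)) / (1 - β i)
      ≤ F / (1 - βmax) := by
    have hFe : F / (1 - βmax)
        = ∑ i, (1 / (m + 1 : ℝ)) * (γ i / (1 - β i)) / (1 - βmax) := by
      rw [hF, Finset.mul_sum, Finset.sum_div]
    rw [hFe]
    refine Finset.sum_le_sum fun i _ => ?_
    rw [div_le_div_iff₀ (h1β i) h1βmax]
    have hkey : β i * (1 - βmax) ≤ 1 - β i := by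
      nlinarith [mul_le_mul_of_nonneg_left (hβle i) (hβ0 i), (hβ i).2, hβ0 i]
    have hγpos := (hγ i).le
    have h1βi := (h1β i).le
    have hMnn : (0:ℝ) ≤ 1 / (m + 1 : ℝ) := by positivity
    have hgd : (0:ℝ) ≤ γ i / (1 - β i) := div_nonneg hγpos h1βi
    calc (1 / (m + 1 : ℝ)) * (β i * γ i / (1 - β i)) * (1 - βmax)
        = ((1 / (m + 1 : ℝ)) * (γ i / (1 - β i))) * (β i * (1 - βmax)) := by ring
      _ ≤ ((1 / (m + 1 : ℝ)) * (γ i / (1 - β i))) * (1 - β i) :=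
          mul_le_mul_of_nonneg_left hkey (mul_nonneg hMnn hgd)
      _ = (1 / (m + 1 : ℝ)) * (γ i / (1 - β i)) * (1 - β i) := by ring
  -- gradient norms vs suboptimality
  have hGbd : ∑ j ∈ Finset.range (K+1), w j * ‖gradient f (x j)‖^2
      ≤ 2 * L * ∑ k ∈ Finset.range (K+1), w k * (f (x k) - f xstar) := by
    rw [Finset.mul_sum]
    refine Finset.sum_le_sum fun j _ => ?_
    have := AggHB_gradsq f hf L hL hsmooth xstar hmin (x j)
    calc w j * ‖gradient f (x j)‖^2 ≤ w j * (2 * L * (f (x j) - f xstar)) :=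
          mul_le_mul_of_nonneg_left this (hw0 j)
      _ = 2 * L * (w j * (f (x j) - f xstar)) := by ring
  -- put everything together
  set SD := ∑ k ∈ Finset.range (K+1), w k * (f (x k) - f xstar) with hSD
  have hSD0 : 0 ≤ SD := Finset.sum_nonneg fun k _ =>
    mul_nonneg (hw0 k) (sub_nonneg.mpr (hmin (x k)))
  have hG0 : 0 ≤ ∑ j ∈ Finset.range (K+1), w j * ‖gradient f (x j)‖^2 :=
    Finset.sum_nonneg fun j _ => mul_nonneg (hw0 j) (sq_nonneg _)
  have hBB' : B * (F / (1 - βmax)) ≤ 1 / (48 * L^2) := by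
    rw [mul_div_assoc']
    rw [div_le_div_iff₀ h1βmax (by positivity)]
    have h48 : (0:ℝ) < 48 * L^2 := by positivity
    have h1 := mul_le_mul_of_nonneg_right hBF h48.le
    have h2 : (1 - βmax)/(48*L^2)*(48*L^2) = 1 - βmax := div_mul_cancel₀ _ h48.ne'
    linarith
  have hS : ∑ k ∈ Finset.range (K+1), w k * ‖x k - xt k‖^2
      ≤ B * (F / (1 - βmax)) * ((4/3) * (2 * L * SD)) := by
    calc ∑ k ∈ Finset.range (K+1), w k * ‖x k - xt k‖^2
        ≤ B * ∑ i, ∑ k ∈ Finset.range K, ∑ j ∈ Finset.range (k+1),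
            w (k+1) * ((1 / (m + 1 : ℝ)) * (β i * γ i / (1 - β i)) * (β i)^(k - j)
              * ‖gradient f (x j)‖^2) := step1
      _ ≤ B * ∑ i, ((1 / (m + 1 : ℝ)) * (β i * γ i / (1 - β i)) / (1 - β i)) *
            ((4/3) * ∑ j ∈ Finset.range (K+1), w j * ‖gradient f (x j)‖^2) := by
          exact mul_le_mul_of_nonneg_left (Finset.sum_le_sum fun i _ => step2 i) hB0
      _ = B * ((∑ i, (1 / (m + 1 : ℝ)) * (β i * γ i / (1 - β i)) / (1 - β i)) *
            ((4/3) * ∑ j ∈ Finset.range (K+1), w j * ‖gradient f (x j)‖^2)) := by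
          rw [← Finset.sum_mul]
      _ ≤ B * ((F / (1 - βmax)) *
            ((4/3) * ∑ j ∈ Finset.range (K+1), w j * ‖gradient f (x j)‖^2)) := by
          refine mul_le_mul_of_nonneg_left ?_ hB0
          exact mul_le_mul_of_nonneg_right hB' (by positivity)
      _ ≤ B * ((F / (1 - βmax)) * ((4/3) * (2 * L * SD))) := by
          refine mul_le_mul_of_nonneg_left ?_ hB0
          refine mul_le_mul_of_nonneg_left ?_ (div_nonneg hFpos.le h1βmax.le)
          exact mul_le_mul_of_nonneg_left hGbd (by norm_num)
      _ = B * (F / (1 - βmax)) * ((4/3) * (2 * L * SD)) := by ring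
  have hLF0 : (0:ℝ) ≤ 3 * L * F := by positivity
  calc 3 * L * F * ∑ k ∈ Finset.range (K+1), w k * ‖x k - xt k‖^2
      ≤ 3 * L * F * (B * (F / (1 - βmax)) * ((4/3) * (2 * L * SD))) :=
        mul_le_mul_of_nonneg_left hS hLF0
    _ = (B * (F / (1 - βmax))) * (8 * L^2 * (F * SD)) := by ring
    _ ≤ (1 / (48 * L^2)) * (8 * L^2 * (F * SD)) := by
        refine mul_le_mul_of_nonneg_right hBB' ?_
        positivity
    _ = (1/6) * (F * SD) := by field_simp; ring
    _ ≤ F / 4 * SD := by nlinarith [mul_nonneg hFpos.le hSD0]
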